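/- Let p be a prime and let R be a finite p-group that is not cyclic, and suppose there exists a subgroup H of R such that every automorphism of R fixing H setwise is a power automorphism. Then the center Z(R) of R is cyclic. -/

import Mathlib

open Subgroup


/-- If `a` has order `p` and `b` is a nontrivial element of `⟨a⟩`, then `⟨b⟩ = ⟨a⟩`. -/
private lemma zpow_aux {G : Type*} [Group G] [Finite G] {p : ℕ} (hp : p.Prime) {a b : G}
    (ha : orderOf a = p) (hb : b ∈ Subgroup.zpowers a) (hb1 : b ≠ 1) :
    Subgroup.zpowers b = Subgroup.zpowers a := by
  have hbp : b ^ p = 1 := by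
    obtain ⟨k, rfl⟩ := hb
    have : (a ^ k) ^ (p : ℤ) = (a ^ (p : ℤ)) ^ k := by
      rw [← zpow_mul, ← zpow_mul, mul_comm]
    rw [← zpow_natCast, this, zpow_natCast, ← ha, pow_orderOf_eq_one, one_zpow]
  have hbo : orderOf b = p := by
    rcases (Nat.dvd_prime hp).1 (orderOf_dvd_of_pow_eq_one hbp) with h | h
    · exact absurd (orderOf_eq_one_iff.1 h) hb1
    · exact h
  refine Subgroup.eq_of_le_of_card_ge (Subgroup.zpowers_le.2 hb) ?_
  rw [Nat.card_zpowers, Nat.card_zpowers, ha, hbo]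

private lemma not_mem_aux {G : Type*} [Group G] [Finite G] {p : ℕ} (hp : p.Prime)
    {c w : G} {M : Subgroup G} (hc : c ∉ M) (hco : orderOf c = p) (hw : w ∈ M) (hw1 : w ≠ 1) :
    w ∉ Subgroup.zpowers c := by
  intro hmem
  have h1 : Subgroup.zpowers w = Subgroup.zpowers c := zpow_aux hp hco hmem hw1
  have h2 : c ∈ Subgroup.zpowers w := h1 ▸ Subgroup.mem_zpowers c
  exact hc (Subgroup.zpowers_le.2 hw h2)


private lemma zpowers_isCyclic {G : Type*} [Group G] (x : G) :
    IsCyclic (Subgroup.zpowers x) := by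
  refine ⟨⟨⟨x, Subgroup.mem_zpowers x⟩, fun y => ?_⟩⟩
  obtain ⟨k, hk⟩ := y.2
  exact ⟨k, Subtype.ext (by simpa using hk)⟩

private lemma same_zpowers_aux {G : Type*} [Group G] [Finite G] {p : ℕ} (hp : p.Prime)
    {x a b : G} (ha : orderOf a = p) (hb : orderOf b = p)
    (hax : a ∈ Subgroup.zpowers x) (hbx : b ∈ Subgroup.zpowers x) :
    Subgroup.zpowers a = Subgroup.zpowers b := by
  classical
  by_contra hne
  have hb1 : b ≠ 1 := by
    intro h; rw [h, orderOf_one] at hb; exact hp.ne_one hb.symm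
  have hba : b ∉ Subgroup.zpowers a := fun h => hne (zpow_aux hp ha h hb1).symm
  -- work inside the cyclic group ⟨x⟩
  haveI : Fintype (Subgroup.zpowers x) := Fintype.ofFinite _
  haveI : IsCyclic (Subgroup.zpowers x) := zpowers_isCyclic x
  set S := Subgroup.zpowers x
  set a' : S := ⟨a, hax⟩
  set b' : S := ⟨b, hbx⟩
  have ha' : orderOf a' = p := by rw [Subgroup.orderOf_mk]; exact ha
  have hcount : ({y : S | y ^ p = 1} : Finset S).card ≤ p :=
    IsCyclic.card_pow_eq_one_le hp.pos
  set A : Finset S := Set.toFinset (Subgroup.zpowers a' : Set S)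
  have hAcard : A.card = p := by
    have : A.card = Nat.card (Subgroup.zpowers a') := by
      simp [A, Set.toFinset_card, Nat.card_eq_fintype_card]
    rw [this, Nat.card_zpowers, ha']
  have hbA : b' ∉ A := by
    intro hmem
    rw [Set.mem_toFinset] at hmem
    obtain ⟨k, hk⟩ := hmem
    exact hba ⟨k, by simpa using congrArg (Subtype.val) hk⟩
  have hsub : insert b' A ⊆ ({y : S | y ^ p = 1} : Finset S) := by
    intro y hy
    simp only [Finset.mem_insert] at hy
    simp only [Finset.mem_filter, Finset.mem_univ, true_and, Set.mem_setOf_eq]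
    rcases hy with rfl | hy
    · have : (b : G) ^ p = 1 := by rw [← hb]; exact pow_orderOf_eq_one b
      exact Subtype.ext (by simpa using this)
    · rw [Set.mem_toFinset] at hy
      obtain ⟨k, hk⟩ := hy
      rw [← hk, ← zpow_natCast, ← zpow_mul, mul_comm, zpow_mul, zpow_natCast, ← ha',
        pow_orderOf_eq_one, one_zpow]
  have := Finset.card_le_card hsub
  rw [Finset.card_insert_of_notMem hbA, hAcard] at this
  exact absurd (this.trans hcount) (by omega)

private lemma cyclic_aux {p : ℕ} (hp : p.Prime) (P : Type*) [CommGroup P] [Finite P]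
    (hpP : IsPGroup p P)
    (huniq : ∀ a b : P, orderOf a = p → orderOf b = p → Subgroup.zpowers a = Subgroup.zpowers b) :
    IsCyclic P := by
  classical
  haveI : Fintype P := Fintype.ofFinite P
  set K : ℕ → Subgroup P := fun k => MonoidHom.ker (powMonoidHom (p ^ k) : P →* P) with hKdef
  have hKmem : ∀ k (y : P), y ∈ K k ↔ y ^ p ^ k = 1 := fun k y => Iff.rfl
  -- elements of order p generate a subgroup of size ≤ p
  have hord : ∀ y : P, y ^ p = 1 → y ≠ 1 → orderOf y = p := by
    intro y h1 h2
    rcases (Nat.dvd_prime hp).1 (orderOf_dvd_of_pow_eq_one h1) with h | h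
    · exact absurd (orderOf_eq_one_iff.1 h) h2
    · exact h
  have hcard1 : Nat.card (K 1) ≤ p := by
    by_cases hex : ∃ a : P, orderOf a = p
    · obtain ⟨a, hao⟩ := hex
      have hle : K 1 ≤ Subgroup.zpowers a := by
        intro y hy
        rw [hKmem, pow_one] at hy
        by_cases hy1 : y = 1
        · rw [hy1]; exact one_mem _
        · rw [← huniq y a (hord y hy hy1) hao]; exact Subgroup.mem_zpowers y
      calc Nat.card (K 1) ≤ Nat.card (Subgroup.zpowers a) := Subgroup.card_le_of_le hle
        _ = p := by rw [Nat.card_zpowers, hao]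
    · have : K 1 = ⊥ := by
        rw [eq_bot_iff]
        intro y hy
        rw [hKmem, pow_one] at hy
        by_contra hy1
        exact hex ⟨y, hord y hy (by simpa using hy1)⟩
      rw [this]
      simpa using hp.one_lt.le
  have hK : ∀ k, Nat.card (K k) ≤ p ^ k := by
    intro k
    induction k with
    | zero =>
      have : K 0 = ⊥ := by
        rw [eq_bot_iff]; intro y hy; rw [hKmem, pow_zero, pow_one] at hy; simpa using hy
      simp [this]
    | succ k ih =>
      set ψ : K (k + 1) →* P := (powMonoidHom p).comp (K (k + 1)).subtype with hψ
      have hrange : ψ.range ≤ K k := by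
        rintro _ ⟨y, rfl⟩
        have hy := y.2
        rw [hKmem] at hy ⊢
        show ((y : P) ^ p) ^ p ^ k = 1
        rw [← pow_mul]
        rw [pow_succ'] at hy
        exact hy
      have hker : Nat.card ψ.ker ≤ Nat.card (K 1) := by
        refine Nat.card_le_card_of_injective
          (fun y => (⟨(y : K (k+1)), by
            have := y.2
            rw [MonoidHom.mem_ker] at this
            rw [hKmem, pow_one]
            exact this⟩ : K 1)) ?_
        intro y z h
        have := congrArg Subtype.val h
        simp only at this
        exact Subtype.ext (Subtype.ext this)
      have hcards : Nat.card (K (k + 1)) = Nat.card (K (k+1) ⧸ ψ.ker) * Nat.card ψ.ker :=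
        Subgroup.card_eq_card_quotient_mul_card_subgroup ψ.ker
      have hquot : Nat.card (K (k+1) ⧸ ψ.ker) = Nat.card ψ.range :=
        Nat.card_congr (QuotientGroup.quotientKerEquivRange ψ).toEquiv
      calc Nat.card (K (k + 1)) = Nat.card ψ.range * Nat.card ψ.ker := by rw [hcards, hquot]
        _ ≤ p ^ k * p :=
          Nat.mul_le_mul ((Subgroup.card_le_of_le hrange).trans ih) (hker.trans hcard1)
        _ = p ^ (k + 1) := (pow_succ p k).symm
  apply isCyclic_of_card_pow_eq_one_le
  intro n hn
  set v := n.factorization p with hv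
  have hsub : ∀ a : P, a ^ n = 1 → a ∈ K v := by
    intro a han
    obtain ⟨k, hk⟩ := hpP a
    obtain ⟨j, _, hj⟩ := (Nat.dvd_prime_pow hp).1 (orderOf_dvd_of_pow_eq_one hk)
    have hjv : j ≤ v := by
      rw [hv]
      refine (Nat.Prime.pow_dvd_iff_le_factorization hp (by omega)).1 ?_
      rw [← hj]
      exact orderOf_dvd_of_pow_eq_one han
    rw [hKmem]
    exact orderOf_dvd_iff_pow_eq_one.1 (hj ▸ pow_dvd_pow p hjv)
  have hpvn : p ^ v ≤ n := Nat.ordProj_le p (by omega)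
  calc ({a : P | a ^ n = 1} : Finset P).card
      = Fintype.card {a : P // a ^ n = 1} := (Fintype.card_subtype _).symm
    _ ≤ Fintype.card (K v) := Fintype.card_le_of_injective
        (fun a => ⟨a.1, hsub a.1 a.2⟩)
        (fun x y h => by
          have := congrArg Subtype.val h
          simp only at this
          exact Subtype.ext this)
    _ = Nat.card (K v) := Nat.card_eq_fintype_card.symm
    _ ≤ p ^ v := hK v
    _ ≤ n := hpvn

private lemma coatom_aux {p : ℕ} (hp : p.Prime) {R : Type*} [Group R] [Finite R]
    (hpR : IsPGroup p R) {M : Subgroup R} (hM : IsCoatom M) :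
    ∃ _ : M.Normal, Nat.card (R ⧸ M) = p := by
  haveI : Fact p.Prime := ⟨hp⟩
  haveI hnil : Group.IsNilpotent R := hpR.isNilpotent
  haveI hnorm : M.Normal := Subgroup.NormalizerCondition.normal_of_coatom M normalizerCondition_of_isNilpotent hM
  refine ⟨hnorm, ?_⟩
  have hQ : IsPGroup p (R ⧸ M) := hpR.to_quotient M
  obtain ⟨x, hx⟩ : ∃ x, x ∉ M := by
    by_contra h
    push_neg at h
    exact hM.1 ((Subgroup.eq_top_iff' M).2 h)
  haveI hnt : Nontrivial (R ⧸ M) :=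
    ⟨⟨(x : R ⧸ M), 1, by
      rw [ne_eq, QuotientGroup.eq_one_iff]
      exact hx⟩⟩
  have hdvd : p ∣ Nat.card (R ⧸ M) := by
    obtain ⟨n, hn, hcard⟩ := hQ.nontrivial_iff_card.1 hnt
    rw [hcard]
    exact dvd_pow_self p hn.ne'
  obtain ⟨g, hg⟩ := exists_prime_orderOf_dvd_card' (G := R ⧸ M) p hdvd
  have hsub : ∀ S : Subgroup (R ⧸ M), S = ⊥ ∨ S = ⊤ := by
    intro S
    set T := S.comap (QuotientGroup.mk' M) with hT
    have hMT : M ≤ T := by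
      intro m hm
      show QuotientGroup.mk' M m ∈ S
      have : QuotientGroup.mk' M m = 1 := (QuotientGroup.eq_one_iff m).2 hm
      rw [this]; exact one_mem S
    have hS : S = T.map (QuotientGroup.mk' M) :=
      (Subgroup.map_comap_eq_self_of_surjective (QuotientGroup.mk'_surjective M) S).symm
    rcases hMT.lt_or_eq with h | h
    · right
      rw [hS, hM.2 T h]
      rw [← MonoidHom.range_eq_map]
      exact MonoidHom.range_eq_top_of_surjective _ (QuotientGroup.mk'_surjective M)
    · left
      rw [hS, ← h, eq_bot_iff]
      rintro _ ⟨m, hm, rfl⟩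
      simpa using (QuotientGroup.eq_one_iff m).2 hm
  have hgne : Subgroup.zpowers g ≠ ⊥ := by
    intro h
    have : g = 1 := by
      have := Subgroup.mem_zpowers g
      rw [h] at this
      simpa using this
    rw [this, orderOf_one] at hg
    exact hp.ne_one hg.symm
  have htop : Subgroup.zpowers g = ⊤ := (hsub _).resolve_left hgne
  rw [← Subgroup.card_top (G := R ⧸ M), ← htop, Nat.card_zpowers, hg]

/-- Let `p` be a prime and `R` a finite non-cyclic `p`-group admitting a subgroup `H`
such that every automorphism of `R` fixing `H` setwise is a power automorphism.  Then
the center `Z(R)` is cyclic. -/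
theorem stmt12 (p : ℕ) (hp : p.Prime) (R : Type*) [Group R] [Finite R]
    (hpR : IsPGroup p R) (hnc : ¬ IsCyclic R) (H : Subgroup R)
    (hH : ∀ α : MulAut R, Subgroup.map α.toMonoidHom H = H →
      ∀ x : R, α x ∈ Subgroup.zpowers x) :
    IsCyclic (Subgroup.center R) := by
  by_contra hncZ
  haveI : Fact p.Prime := ⟨hp⟩
  haveI hnt : Nontrivial R := by
    rcases subsingleton_or_nontrivial R with h | h
    · exact absurd isCyclic_of_subsingleton hnc
    · exact h
  -- Step 1: two central elements of order `p` generating distinct subgroups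
  have hPcenter : IsPGroup p (Subgroup.center R) := hpR.to_subgroup _
  have hex : ∃ a b : Subgroup.center R, orderOf a = p ∧ orderOf b = p ∧
      Subgroup.zpowers a ≠ Subgroup.zpowers b := by
    by_contra h
    push_neg at h
    letI : CommGroup (Subgroup.center R) :=
      { (inferInstance : Group (Subgroup.center R)) with
        mul_comm := fun x y => Subtype.ext (Subgroup.mem_center_iff.1 y.2 x) }
    exact hncZ (cyclic_aux hp _ hPcenter (fun a b ha hb => h a b ha hb))
  obtain ⟨a₀, b₀, ha₀, hb₀, hne₀⟩ := hex
  set a : R := (a₀ : R) with hadef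
  set b : R := (b₀ : R) with hbdef
  have ha : orderOf a = p := (Subgroup.orderOf_coe a₀).trans ha₀
  have hb : orderOf b = p := (Subgroup.orderOf_coe b₀).trans hb₀
  have ha1 : a ≠ 1 := by
    intro h; rw [h, orderOf_one] at ha; exact hp.ne_one ha.symm
  have hb1 : b ≠ 1 := by
    intro h; rw [h, orderOf_one] at hb; exact hp.ne_one hb.symm
  have hap : a ^ p = 1 := by rw [← ha]; exact pow_orderOf_eq_one a
  have hbp : b ^ p = 1 := by rw [← hb]; exact pow_orderOf_eq_one b
  have hcoe_mem : ∀ (u v : Subgroup.center R), (u : R) ∈ Subgroup.zpowers (v : R) →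
      u ∈ Subgroup.zpowers v := by
    intro u v ⟨k, hk⟩
    exact ⟨k, Subtype.ext (by simpa using hk)⟩
  have hne : Subgroup.zpowers a ≠ Subgroup.zpowers b := by
    intro h
    apply hne₀
    apply le_antisymm
    · rw [Subgroup.zpowers_le]
      exact hcoe_mem a₀ b₀ (h ▸ Subgroup.mem_zpowers a)
    · rw [Subgroup.zpowers_le]
      exact hcoe_mem b₀ a₀ (h.symm ▸ Subgroup.mem_zpowers b)
  -- Step 2: a maximal subgroup M (containing H if H ≠ ⊤)
  have hbot_ne : (⊥ : Subgroup R) ≠ ⊤ := by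
    intro h
    obtain ⟨x, hx1⟩ := exists_ne (1 : R)
    have := Subgroup.mem_top x
    rw [← h] at this
    exact hx1 (by simpa using this)
  obtain ⟨M, hM, hHM⟩ : ∃ M : Subgroup R, IsCoatom M ∧ (H ≠ ⊤ → H ≤ M) := by
    by_cases hHt : H = ⊤
    · rcases eq_top_or_exists_le_coatom (⊥ : Subgroup R) with h | ⟨M, hM, _⟩
      · exact absurd h hbot_ne
      · exact ⟨M, hM, fun h => absurd hHt h⟩
    · rcases eq_top_or_exists_le_coatom H with h | ⟨M, hM, hle⟩
      · exact absurd h hHt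
      · exact ⟨M, hM, fun _ => hle⟩
  obtain ⟨hMnorm, hcardQ⟩ := coatom_aux hp hpR hM
  obtain ⟨x₀, hx₀⟩ : ∃ x, x ∉ M := by
    by_contra h
    push_neg at h
    exact hM.1 ((Subgroup.eq_top_iff' M).2 h)
  -- Step 3: find z central of order p inside M and x outside M with z ∉ ⟨x⟩
  have key : ∃ z x : R, z ∈ Subgroup.center R ∧ z ∈ M ∧ z ≠ 1 ∧ z ^ p = 1 ∧
      x ∉ M ∧ z ∉ Subgroup.zpowers x := by
    by_cases hA : a ∈ M
    · by_cases hB : b ∈ M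
      · by_cases hax : a ∈ Subgroup.zpowers x₀
        · refine ⟨b, x₀, b₀.2, hB, hb1, hbp, hx₀, fun hbx => ?_⟩
          exact hne (same_zpowers_aux hp ha hb hax hbx)
        · exact ⟨a, x₀, a₀.2, hA, ha1, hap, hx₀, hax⟩
      · exact ⟨a, b, a₀.2, hA, ha1, hap, hB, not_mem_aux hp hB hb hA ha1⟩
    · by_cases hB : b ∈ M
      · exact ⟨b, a, b₀.2, hB, hb1, hbp, hA, not_mem_aux hp hA ha hB hb1⟩
      · -- both a and b lie outside M
        have hbQ : (QuotientGroup.mk' M) b ≠ 1 := by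
          rw [ne_eq, QuotientGroup.mk'_apply, QuotientGroup.eq_one_iff]
          exact hB
        have hZb : Subgroup.zpowers ((QuotientGroup.mk' M) b) = ⊤ := by
          apply Subgroup.eq_top_of_card_eq
          rw [Nat.card_zpowers, hcardQ]
          have hdvd : orderOf ((QuotientGroup.mk' M) b) ∣ p := by
            rw [← hb]
            exact orderOf_map_dvd _ b
          rcases (Nat.dvd_prime hp).1 hdvd with h | h
          · exact absurd (orderOf_eq_one_iff.1 h) hbQ
          · exact h
        have hmem : (QuotientGroup.mk' M) a ∈ Subgroup.zpowers ((QuotientGroup.mk' M) b) := by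
          rw [hZb]; exact Subgroup.mem_top _
        obtain ⟨k, hk⟩ := hmem
        refine ⟨a * (b ^ k)⁻¹, b, ?_, ?_, ?_, ?_, hB, ?_⟩
        · exact mul_mem a₀.2 (inv_mem (zpow_mem b₀.2 k))
        · rw [← QuotientGroup.eq_one_iff (G := R) (N := M)]
          have : ((a * (b ^ k)⁻¹ : R) : R ⧸ M) =
              ((QuotientGroup.mk' M) a) * (((QuotientGroup.mk' M) b) ^ k)⁻¹ := by
            simp [QuotientGroup.mk'_apply]
          rw [this, ← hk, mul_inv_cancel]
        · intro h
          have : a = b ^ k := by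
            rw [mul_inv_eq_one] at h
            exact h
          exact hne (zpow_aux hp hb ⟨k, this.symm⟩ ha1)
        · have hcomm : Commute a ((b ^ k)⁻¹) :=
            (Subgroup.mem_center_iff.1 a₀.2 ((b ^ k)⁻¹)).symm
          rw [hcomm.mul_pow, hap, one_mul, inv_pow]
          have : (b ^ k) ^ p = 1 := by
            rw [← zpow_natCast (b ^ k), ← zpow_mul, mul_comm, zpow_mul, zpow_natCast, hbp,
              one_zpow]
          rw [this, inv_one]
        · intro hmem'
          by_cases h1 : a * (b ^ k)⁻¹ = 1
          · have : a = b ^ k := by rwa [mul_inv_eq_one] at h1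
            exact hne (zpow_aux hp hb ⟨k, this.symm⟩ ha1)
          · have hzM : a * (b ^ k)⁻¹ ∈ M := by
              rw [← QuotientGroup.eq_one_iff (G := R) (N := M)]
              have : ((a * (b ^ k)⁻¹ : R) : R ⧸ M) =
                  ((QuotientGroup.mk' M) a) * (((QuotientGroup.mk' M) b) ^ k)⁻¹ := by
                simp [QuotientGroup.mk'_apply]
              rw [this, ← hk, mul_inv_cancel]
            exact not_mem_aux hp hB hb hzM h1 hmem'
  obtain ⟨z, x, hzc, hzM, hz1, hzp, hxM, hzx⟩ := key
  have hzo : orderOf z = p := orderOf_eq_prime hzp hz1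
  -- Step 4: build the automorphism y ↦ y * f y
  set Z : Subgroup R := Subgroup.zpowers z with hZdef
  have hZcard : Nat.card Z = p := by rw [hZdef, Nat.card_zpowers, hzo]
  set e : (R ⧸ M) ≃* Z := mulEquivOfPrimeCardEq hcardQ hZcard with hedef
  set f : R →* R := Z.subtype.comp (e.toMonoidHom.comp (QuotientGroup.mk' M)) with hfdef
  have hfZ : ∀ y : R, f y ∈ Z := fun y => (e ((QuotientGroup.mk' M) y)).2
  have hZM : Z ≤ M := Subgroup.zpowers_le.2 hzM
  have hZC : Z ≤ Subgroup.center R := Subgroup.zpowers_le.2 hzc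
  have hfM : ∀ y ∈ M, f y = 1 := by
    intro y hy
    show (Z.subtype) (e ((QuotientGroup.mk' M) y)) = 1
    have : (QuotientGroup.mk' M) y = 1 := by
      rw [QuotientGroup.mk'_apply, QuotientGroup.eq_one_iff]; exact hy
    rw [this, map_one, map_one]
  have hff : ∀ y : R, f (f y) = 1 := fun y => hfM _ (hZM (hfZ y))
  have hfnot : ∀ y : R, y ∉ M → f y ≠ 1 := by
    intro y hy h
    apply hy
    have h1 : (Z.subtype) (e ((QuotientGroup.mk' M) y)) = (Z.subtype) 1 := by
      rw [map_one]; exact h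
    have h2 : e ((QuotientGroup.mk' M) y) = 1 := Z.subtype_injective h1
    have h3 : (QuotientGroup.mk' M) y = 1 := by
      apply e.injective
      rw [h2, map_one]
    rwa [QuotientGroup.mk'_apply, QuotientGroup.eq_one_iff] at h3
  have hfc : ∀ (y g : R), g * f y = f y * g := fun y g =>
    Subgroup.mem_center_iff.1 (hZC (hfZ y)) g
  set α : MulAut R :=
    { toFun := fun y => y * f y
      invFun := fun y => y * (f y)⁻¹
      left_inv := by
        intro y
        show (y * f y) * (f (y * f y))⁻¹ = y
        rw [map_mul, hff, mul_one, mul_inv_cancel_right]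
      right_inv := by
        intro y
        show (y * (f y)⁻¹) * f (y * (f y)⁻¹) = y
        rw [map_mul, map_inv, hff, inv_one, mul_one, inv_mul_cancel_right]
      map_mul' := by
        intro u v
        show (u * v) * f (u * v) = (u * f u) * (v * f v)
        rw [map_mul]
        calc u * v * (f u * f v) = u * (v * f u) * f v := by group
          _ = u * (f u * v) * f v := by rw [hfc u v]
          _ = (u * f u) * (v * f v) := by group } with hαdef
  have hαapp : ∀ y : R, α y = y * f y := fun y => rfl
  have hαH : Subgroup.map α.toMonoidHom H = H := by
    by_cases hHt : H = ⊤
    · rw [hHt, ← MonoidHom.range_eq_map]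
      exact MonoidHom.range_eq_top_of_surjective _ α.surjective
    · have hle : H ≤ M := hHM hHt
      have hfix : ∀ h ∈ H, α h = h := by
        intro h hh
        rw [hαapp, hfM h (hle hh), mul_one]
      apply le_antisymm
      · rintro _ ⟨h, hh, rfl⟩
        show α h ∈ H
        rw [hfix h hh]; exact hh
      · intro h hh
        exact ⟨h, hh, hfix h hh⟩
  have hpow := hH α hαH x
  rw [hαapp] at hpow
  have hfx : f x ∈ Subgroup.zpowers x := by
    have := (Subgroup.mul_mem_cancel_left (Subgroup.zpowers x) (Subgroup.mem_zpowers x)).1 hpow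
    exact this
  have hfx1 : f x ≠ 1 := hfnot x hxM
  have heq : Subgroup.zpowers (f x) = Subgroup.zpowers z := zpow_aux hp hzo (hfZ x) hfx1
  have hle2 : Subgroup.zpowers (f x) ≤ Subgroup.zpowers x := Subgroup.zpowers_le.2 hfx
  rw [heq] at hle2
  exact hzx (hle2 (Subgroup.mem_zpowers z))
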